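/- Let r : [0,1]² → (0,1) be measurable with log r ∈ L¹([0,1]²), and let r̄_n be the level-n block-average approximant of r. If r̄_n → r almost everywhere, then ‖log r̄_n - log r‖_{L¹} → 0 as n → ∞. -/

import Mathlib

open MeasureTheory

noncomputable def sqMeasure : Measure (ℝ × ℝ) :=
  volume.restrict (Set.Icc (0:ℝ) 1 ×ˢ Set.Icc (0:ℝ) 1)

noncomputable def blockAvg (n : ℕ) (h : ℝ × ℝ → ℝ) : ℝ × ℝ → ℝ := fun q =>
  (n:ℝ)^2 * ∫ p in
      Set.Ico ((⌊(n:ℝ) * q.1⌋ : ℝ) / n) (((⌊(n:ℝ) * q.1⌋ : ℝ) + 1) / n) ×ˢ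
      Set.Ico ((⌊(n:ℝ) * q.2⌋ : ℝ) / n) (((⌊(n:ℝ) * q.2⌋ : ℝ) + 1) / n), h p

-- 1D block facts
lemma floor_block_sub {n : ℕ} (hn : 1 ≤ n) {x : ℝ} (hx : x ∈ Set.Ico (0:ℝ) 1) :
    Set.Ico ((⌊(n:ℝ) * x⌋ : ℝ) / n) (((⌊(n:ℝ) * x⌋ : ℝ) + 1) / n) ⊆ Set.Icc (0:ℝ) 1 ∧
    x ∈ Set.Ico ((⌊(n:ℝ) * x⌋ : ℝ) / n) (((⌊(n:ℝ) * x⌋ : ℝ) + 1) / n) := by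
  have hn0 : (0:ℝ) < n := by exact_mod_cast hn
  have h1 : (0:ℤ) ≤ ⌊(n:ℝ) * x⌋ := Int.floor_nonneg.2 (by nlinarith [hx.1])
  have h2 : ⌊(n:ℝ) * x⌋ < (n:ℤ) := by
    rw [Int.floor_lt]; push_cast; nlinarith [hx.2]
  constructor
  · intro y hy
    rcases hy with ⟨hy1, hy2⟩
    have h1r : (0:ℝ) ≤ (⌊(n:ℝ) * x⌋ : ℝ) := by exact_mod_cast h1
    have h2r : ((⌊(n:ℝ) * x⌋ : ℝ) + 1) ≤ n := by exact_mod_cast h2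
    refine ⟨le_trans (div_nonneg h1r hn0.le) hy1, le_of_lt (lt_of_lt_of_le hy2 ?_)⟩
    exact (div_le_one hn0).2 h2r
  · refine ⟨?_, ?_⟩
    · rw [div_le_iff₀ hn0]; rw [mul_comm]; exact Int.floor_le _
    · rw [lt_div_iff₀ hn0]; rw [mul_comm]; exact Int.lt_floor_add_one _

lemma block_volume {n : ℕ} (hn : 1 ≤ n) (a b : ℝ) :
    volume (Set.Ico (a/n) ((a+1)/n) ×ˢ Set.Ico (b/n) ((b+1)/n))
      = ENNReal.ofReal ((1:ℝ)/n) * ENNReal.ofReal ((1:ℝ)/n) := by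
  have hn0 : (0:ℝ) < n := by exact_mod_cast hn
  rw [MeasureTheory.Measure.volume_eq_prod, Measure.prod_prod, Real.volume_Ico, Real.volume_Ico]
  rw [show (a+1)/n - a/n = 1/n by field_simp; ring, show (b+1)/n - b/n = 1/n by field_simp; ring]

lemma jensen_block (r : ℝ × ℝ → ℝ)
    (hr : ∀ p ∈ Set.Icc (0:ℝ) 1 ×ˢ Set.Icc (0:ℝ) 1, r p ∈ Set.Ioo (0:ℝ) 1)
    (hrm : Measurable r)
    (hlogr : Integrable (fun p => Real.log (r p)) sqMeasure)
    {n : ℕ} (hn : 1 ≤ n) {q : ℝ × ℝ} (hq : q ∈ Set.Ico (0:ℝ) 1 ×ˢ Set.Ico (0:ℝ) 1) :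
    0 < blockAvg n r q ∧ blockAvg n r q ≤ 1 ∧
      -Real.log (blockAvg n r q) ≤ blockAvg n (fun p => -Real.log (r p)) q := by
  have hn0 : (0:ℝ) < n := by exact_mod_cast hn
  set B : Set (ℝ × ℝ) :=
    Set.Ico ((⌊(n:ℝ) * q.1⌋ : ℝ) / n) (((⌊(n:ℝ) * q.1⌋ : ℝ) + 1) / n) ×ˢ
      Set.Ico ((⌊(n:ℝ) * q.2⌋ : ℝ) / n) (((⌊(n:ℝ) * q.2⌋ : ℝ) + 1) / n) with hB
  have hBsub : B ⊆ Set.Icc (0:ℝ) 1 ×ˢ Set.Icc (0:ℝ) 1 :=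
    Set.prod_mono (floor_block_sub hn hq.1).1 (floor_block_sub hn hq.2).1
  have hBvol : volume B = ENNReal.ofReal ((1:ℝ)/n) * ENNReal.ofReal ((1:ℝ)/n) :=
    block_volume hn _ _
  set μB : Measure (ℝ × ℝ) := volume.restrict B with hμB
  have hvol_ne : volume B ≠ 0 := by
    rw [hBvol]
    exact mul_ne_zero (ENNReal.ofReal_pos.2 (by positivity)).ne' (ENNReal.ofReal_pos.2 (by positivity)).ne'
  have hvol_top : volume B ≠ ⊤ := by
    rw [hBvol]; exact (ENNReal.mul_lt_top ENNReal.ofReal_lt_top ENNReal.ofReal_lt_top).ne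
  have hBuniv : μB Set.univ = volume B := by
    rw [hμB, Measure.restrict_apply MeasurableSet.univ, Set.univ_inter]
  haveI : IsFiniteMeasure μB := by
    constructor; rw [hBuniv]; exact hvol_top.lt_top
  haveI : NeZero μB := by
    refine ⟨fun h => hvol_ne ?_⟩; rw [← hBuniv, h]; simp
  have haeB : ∀ᵐ p ∂μB, p ∈ B := ae_restrict_mem (by
    exact (measurableSet_Ico.prod measurableSet_Ico))
  have hrB : ∀ᵐ p ∂μB, r p ∈ Set.Ioo (0:ℝ) 1 :=
    haeB.mono (fun p hp => hr p (hBsub hp))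
  -- integrability of r on B
  have hrint : Integrable r μB := by
    refine Measure.integrableOn_of_bounded hvol_top (hrm.aestronglyMeasurable) (M := 1) ?_
    exact hrB.mono (fun p hp => by rw [Real.norm_eq_abs, abs_of_pos hp.1]; exact hp.2.le)
  have hlogint : Integrable (fun p => Real.log (r p)) μB :=
    hlogr.mono_measure (Measure.restrict_mono hBsub le_rfl)
  have hexpint : Integrable (fun p => Real.exp (Real.log (r p))) μB :=
    hrint.congr (hrB.mono (fun p hp => (Real.exp_log hp.1).symm))
  -- Jensen
  have hjen := convexOn_exp.map_average_le Real.continuous_exp.continuousOn isClosed_univ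
    (Filter.Eventually.of_forall (fun p => Set.mem_univ _)) hlogint (μ := μB)
    (by exact hexpint)
  have havg_exp : (⨍ p, Real.exp (Real.log (r p)) ∂μB) = ⨍ p, r p ∂μB :=
    average_congr (hrB.mono (fun p hp => Real.exp_log hp.1))
  have htoReal : (μB Set.univ).toReal = 1/n * (1/n) := by
    rw [hBuniv, hBvol, ← ENNReal.ofReal_mul (by positivity), ENNReal.toReal_ofReal (by positivity)]
  have hscale : ∀ f : ℝ × ℝ → ℝ, (⨍ p, f p ∂μB) = (n:ℝ)^2 * ∫ p, f p ∂μB := by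
    intro f
    rw [average_eq, measureReal_def, htoReal, smul_eq_mul]
    congr 1
    field_simp
  have hBA : blockAvg n r q = (n:ℝ)^2 * ∫ p, r p ∂μB := rfl
  have hBAlog : blockAvg n (fun p => -Real.log (r p)) q
      = (n:ℝ)^2 * ∫ p, -Real.log (r p) ∂μB := rfl
  -- positivity
  have hpos : 0 < blockAvg n r q := by
    rw [hBA, ← hscale]
    calc (0:ℝ) < Real.exp (⨍ p, Real.log (r p) ∂μB) := Real.exp_pos _
    _ ≤ ⨍ p, Real.exp (Real.log (r p)) ∂μB := hjen
    _ = ⨍ p, r p ∂μB := havg_exp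
  -- upper bound
  have hle1 : blockAvg n r q ≤ 1 := by
    have hone : Integrable (fun _ : ℝ × ℝ => (1:ℝ)) μB := integrable_const 1
    have hmono : ∫ p, r p ∂μB ≤ ∫ _p, (1:ℝ) ∂μB :=
      integral_mono_ae hrint hone (hrB.mono (fun p hp => hp.2.le))
    have hint1 : ∫ _p, (1:ℝ) ∂μB = 1/n * (1/n) := by
      rw [integral_const, measureReal_def, htoReal, smul_eq_mul, mul_one]
    rw [hBA]
    calc (n:ℝ)^2 * ∫ p, r p ∂μB ≤ (n:ℝ)^2 * (1/n * (1/n)) := by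
          rw [← hint1]; exact mul_le_mul_of_nonneg_left hmono (by positivity)
    _ = 1 := by field_simp
  refine ⟨hpos, hle1, ?_⟩
  -- Jensen inequality for log
  have hlog_le : ⨍ p, Real.log (r p) ∂μB ≤ Real.log (blockAvg n r q) := by
    rw [Real.le_log_iff_exp_le hpos, hBA, ← hscale]
    exact le_trans hjen (le_of_eq havg_exp)
  rw [hBAlog]
  have : ∫ p, -Real.log (r p) ∂μB = -∫ p, Real.log (r p) ∂μB := integral_neg _
  rw [this]
  have := hscale (fun p => Real.log (r p))
  nlinarith [hlog_le, this]

lemma blockAvg_measurable (n : ℕ) (h : ℝ × ℝ → ℝ) : Measurable (blockAvg n h) := by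
  have heq : blockAvg n h = (fun z : ℤ × ℤ => (n:ℝ)^2 *
      ∫ p in Set.Ico ((z.1:ℝ)/n) (((z.1:ℝ)+1)/n) ×ˢ Set.Ico ((z.2:ℝ)/n) (((z.2:ℝ)+1)/n), h p) ∘
      (fun q : ℝ × ℝ => (⌊(n:ℝ)*q.1⌋, ⌊(n:ℝ)*q.2⌋)) := rfl
  rw [heq]
  exact (measurable_of_countable _).comp
    (((Int.measurable_floor).comp (measurable_const.mul measurable_fst)).prodMk
      ((Int.measurable_floor).comp (measurable_const.mul measurable_snd)))

lemma nat_block_sub {n i : ℕ} (hn : 1 ≤ n) (hi : i < n) :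
    Set.Ico ((i:ℝ)/n) (((i:ℝ)+1)/n) ⊆ Set.Icc (0:ℝ) 1 := by
  have hn0 : (0:ℝ) < n := by exact_mod_cast hn
  have hi' : ((i:ℝ)+1) ≤ n := by exact_mod_cast hi
  intro y hy
  exact ⟨le_trans (div_nonneg (by positivity) hn0.le) hy.1,
    le_of_lt (lt_of_lt_of_le hy.2 ((div_le_one hn0).2 hi'))⟩

lemma floor_eq_on {n i : ℕ} (hn : 1 ≤ n) {x : ℝ}
    (hx : x ∈ Set.Ico ((i:ℝ)/n) (((i:ℝ)+1)/n)) : ⌊(n:ℝ)*x⌋ = (i:ℤ) := by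
  have hn0 : (0:ℝ) < n := by exact_mod_cast hn
  obtain ⟨hx1, hx2⟩ := hx
  rw [div_le_iff₀ hn0] at hx1
  rw [lt_div_iff₀ hn0] at hx2
  rw [Int.floor_eq_iff]
  constructor
  · push_cast; nlinarith
  · push_cast; nlinarith

lemma Ico_cover_1d {n : ℕ} (hn : 1 ≤ n) :
    Set.Ico (0:ℝ) 1 = ⋃ i ∈ Finset.range n, Set.Ico ((i:ℝ)/n) (((i:ℝ)+1)/n) := by
  have hn0 : (0:ℝ) < n := by exact_mod_cast hn
  ext x
  simp only [Set.mem_iUnion, Finset.mem_range, exists_prop]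
  constructor
  · intro hx
    have h1 : (0:ℤ) ≤ ⌊(n:ℝ) * x⌋ := Int.floor_nonneg.2 (by nlinarith [hx.1])
    have h2 : ⌊(n:ℝ) * x⌋ < (n:ℤ) := by
      rw [Int.floor_lt]; push_cast; nlinarith [hx.2]
    refine ⟨⌊(n:ℝ) * x⌋.toNat, ?_, ?_⟩
    · omega
    · have hcast : ((⌊(n:ℝ) * x⌋.toNat : ℕ) : ℝ) = ((⌊(n:ℝ) * x⌋ : ℤ) : ℝ) := by
        rw [← Int.cast_natCast, Int.toNat_of_nonneg h1]
      rw [hcast]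
      exact (floor_block_sub hn hx).2
  · rintro ⟨i, hi, hxi⟩
    have := nat_block_sub hn hi hxi
    refine ⟨this.1, lt_of_lt_of_le hxi.2 ?_⟩
    have hi' : ((i:ℝ)+1) ≤ n := by exact_mod_cast hi
    exact (div_le_one hn0).2 hi'

lemma blockAvg_lintegral (g : ℝ × ℝ → ℝ) (hgm : Measurable g)
    (hgnn : ∀ p ∈ Set.Icc (0:ℝ) 1 ×ˢ Set.Icc (0:ℝ) 1, 0 ≤ g p)
    (hgi : Integrable g sqMeasure) {n : ℕ} (hn : 1 ≤ n) :
    ∫⁻ q in Set.Ico (0:ℝ) 1 ×ˢ Set.Ico (0:ℝ) 1, ENNReal.ofReal (blockAvg n g q)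
      = ∫⁻ q in Set.Ico (0:ℝ) 1 ×ˢ Set.Ico (0:ℝ) 1, ENNReal.ofReal (g q) := by
  have hn0 : (0:ℝ) < n := by exact_mod_cast hn
  set T : ℕ × ℕ → Set (ℝ × ℝ) := fun z =>
    Set.Ico ((z.1:ℝ)/n) (((z.1:ℝ)+1)/n) ×ˢ Set.Ico ((z.2:ℝ)/n) (((z.2:ℝ)+1)/n) with hT
  set s : Finset (ℕ × ℕ) := Finset.range n ×ˢ Finset.range n with hs
  have hTm : ∀ z ∈ s, MeasurableSet (T z) := fun z _ =>
    measurableSet_Ico.prod measurableSet_Ico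
  have hTsub : ∀ z ∈ s, T z ⊆ Set.Icc (0:ℝ) 1 ×ˢ Set.Icc (0:ℝ) 1 := by
    rintro ⟨i, j⟩ hz
    rw [hs, Finset.mem_product] at hz
    exact Set.prod_mono (nat_block_sub hn (Finset.mem_range.1 hz.1))
      (nat_block_sub hn (Finset.mem_range.1 hz.2))
  have hcover : Set.Ico (0:ℝ) 1 ×ˢ Set.Ico (0:ℝ) 1 = ⋃ z ∈ s, T z := by
    ext q
    simp only [Set.mem_iUnion, exists_prop, Set.mem_prod, hT, hs, Finset.mem_product,
      Finset.mem_range]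
    constructor
    · rintro ⟨h1, h2⟩
      rw [Ico_cover_1d hn] at h1 h2
      simp only [Set.mem_iUnion, Finset.mem_range, exists_prop] at h1 h2
      obtain ⟨i, hi, hxi⟩ := h1
      obtain ⟨j, hj, hxj⟩ := h2
      exact ⟨(i, j), ⟨hi, hj⟩, hxi, hxj⟩
    · rintro ⟨⟨i, j⟩, ⟨hi, hj⟩, hxi, hxj⟩
      rw [Ico_cover_1d hn]
      simp only [Set.mem_iUnion, Finset.mem_range, exists_prop]
      exact ⟨⟨i, hi, hxi⟩, ⟨j, hj, hxj⟩⟩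
  have hdisj : Set.PairwiseDisjoint (↑s : Set (ℕ × ℕ)) T := by
    rintro ⟨i, j⟩ _ ⟨k, l⟩ _ hne
    have key : ∀ a b : ℕ, a ≠ b →
        Disjoint (Set.Ico ((a:ℝ)/n) (((a:ℝ)+1)/n)) (Set.Ico ((b:ℝ)/n) (((b:ℝ)+1)/n)) := by
      intro a b hab
      rw [Set.Ico_disjoint_Ico]
      rcases Nat.lt_or_ge a b with h | h
      · have : ((a:ℝ)+1) ≤ (b:ℝ) := by exact_mod_cast h
        calc min (((a:ℝ)+1)/n) (((b:ℝ)+1)/n) ≤ ((a:ℝ)+1)/n := min_le_left _ _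
        _ ≤ (b:ℝ)/n := by gcongr
        _ ≤ max ((a:ℝ)/n) ((b:ℝ)/n) := le_max_right _ _
      · have hba : b < a := by omega
        have : ((b:ℝ)+1) ≤ (a:ℝ) := by exact_mod_cast hba
        calc min (((a:ℝ)+1)/n) (((b:ℝ)+1)/n) ≤ ((b:ℝ)+1)/n := min_le_right _ _
        _ ≤ (a:ℝ)/n := by gcongr
        _ ≤ max ((a:ℝ)/n) ((b:ℝ)/n) := le_max_left _ _
    simp only [Function.onFun, hT]
    rw [Set.disjoint_prod]
    rcases Prod.mk.injEq .. ▸ (fun h => hne h : ¬((i,j) = (k,l))) with _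
    by_cases hik : i = k
    · right
      exact key j l (by rintro rfl; exact hne (by rw [hik]))
    · left
      exact key i k hik
  -- value of blockAvg on each block
  have hval : ∀ z ∈ s, ∀ q ∈ T z, blockAvg n g q = (n:ℝ)^2 * ∫ p in T z, g p := by
    rintro ⟨i, j⟩ hz q hq
    have h1 : ⌊(n:ℝ) * q.1⌋ = (i:ℤ) := floor_eq_on hn hq.1
    have h2 : ⌊(n:ℝ) * q.2⌋ = (j:ℤ) := floor_eq_on hn hq.2
    simp only [blockAvg, h1, h2, hT]
    push_cast
    rfl
  rw [hcover, lintegral_biUnion_finset hdisj hTm, lintegral_biUnion_finset hdisj hTm]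
  refine Finset.sum_congr rfl (fun z hz => ?_)
  have hTint : IntegrableOn g (T z) volume :=
    hgi.mono_measure (Measure.restrict_mono (hTsub z hz) le_rfl)
  have hnn' : 0 ≤ᵐ[volume.restrict (T z)] g :=
    (ae_restrict_mem (hTm z hz)).mono fun p hp => hgnn p (hTsub z hz hp)
  have hI : ENNReal.ofReal (∫ p in T z, g p) = ∫⁻ p in T z, ENNReal.ofReal (g p) :=
    ofReal_integral_eq_lintegral_ofReal hTint hnn'
  have hInn : (0:ℝ) ≤ ∫ p in T z, g p := integral_nonneg_of_ae hnn'
  have hvolT : volume (T z) = ENNReal.ofReal ((1:ℝ)/n) * ENNReal.ofReal ((1:ℝ)/n) :=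
    block_volume hn _ _
  calc ∫⁻ q in T z, ENNReal.ofReal (blockAvg n g q)
      = ∫⁻ _q in T z, ENNReal.ofReal ((n:ℝ)^2 * ∫ p in T z, g p) :=
        setLIntegral_congr_fun (hTm z hz)
          (fun q hq => by rw [hval z hz q hq])
    _ = ENNReal.ofReal ((n:ℝ)^2 * ∫ p in T z, g p) * volume (T z) :=
        setLIntegral_const _ _
    _ = ENNReal.ofReal (∫ p in T z, g p) := by
        rw [hvolT, ← ENNReal.ofReal_mul (by positivity), ← ENNReal.ofReal_mul (by positivity)]
        congr 1
        field_simp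
    _ = ∫⁻ p in T z, ENNReal.ofReal (g p) := hI

lemma sq_null : volume ((Set.Icc (0:ℝ) 1 ×ˢ Set.Icc (0:ℝ) 1) \ (Set.Ico (0:ℝ) 1 ×ˢ Set.Ico (0:ℝ) 1)) = 0 := by
  have hsub : (Set.Icc (0:ℝ) 1 ×ˢ Set.Icc (0:ℝ) 1) \ (Set.Ico (0:ℝ) 1 ×ˢ Set.Ico (0:ℝ) 1) ⊆
      (({1} : Set ℝ) ×ˢ (Set.univ : Set ℝ)) ∪ ((Set.univ : Set ℝ) ×ˢ ({1} : Set ℝ)) := by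
    rintro ⟨x, y⟩ ⟨⟨hx, hy⟩, hq⟩
    simp only [Set.mem_prod, Set.mem_Ico, Set.mem_Icc] at hx hy hq
    by_cases h1 : x < 1
    · right
      have : ¬ y < 1 := by
        intro hy1; exact hq ⟨⟨hx.1, h1⟩, hy.1, hy1⟩
      exact ⟨Set.mem_univ _, by simpa using le_antisymm hy.2 (not_lt.1 this)⟩
    · left
      exact ⟨by simpa using le_antisymm hx.2 (not_lt.1 h1), Set.mem_univ _⟩
  refine measure_mono_null hsub (measure_union_null ?_ ?_)
  · rw [MeasureTheory.Measure.volume_eq_prod, Measure.prod_prod]; simp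
  · rw [MeasureTheory.Measure.volume_eq_prod, Measure.prod_prod]; simp

lemma sq_ae_eq : (Set.Icc (0:ℝ) 1 ×ˢ Set.Icc (0:ℝ) 1 : Set (ℝ × ℝ)) =ᵐ[volume]
    (Set.Ico (0:ℝ) 1 ×ˢ Set.Ico (0:ℝ) 1 : Set (ℝ × ℝ)) := by
  rw [MeasureTheory.ae_eq_set]
  constructor
  · exact sq_null
  · refine measure_mono_null (fun q hq => ?_) (measure_empty (μ := volume))
    exact absurd (Set.prod_mono Set.Ico_subset_Icc_self Set.Ico_subset_Icc_self hq.1) hq.2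

lemma sq_lintegral_eq (f : ℝ × ℝ → ENNReal) :
    ∫⁻ q, f q ∂sqMeasure = ∫⁻ q in Set.Ico (0:ℝ) 1 ×ˢ Set.Ico (0:ℝ) 1, f q := by
  exact setLIntegral_congr sq_ae_eq

lemma sq_ae_mem_Ico : ∀ᵐ q ∂sqMeasure, q ∈ Set.Ico (0:ℝ) 1 ×ˢ Set.Ico (0:ℝ) 1 := by
  rw [ae_iff]
  unfold sqMeasure
  rw [Measure.restrict_apply]
  · refine measure_mono_null (fun q hq => ?_) sq_null
    exact ⟨hq.2, hq.1⟩
  · exact (measurableSet_Ico.prod measurableSet_Ico).compl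

theorem log_blockAvg_L1_convergence
    (r : ℝ × ℝ → ℝ) (hrm : Measurable r)
    (hr : ∀ p ∈ Set.Icc (0:ℝ) 1 ×ˢ Set.Icc (0:ℝ) 1, r p ∈ Set.Ioo (0:ℝ) 1)
    (hlogr : Integrable (fun p => Real.log (r p)) sqMeasure)
    (hae : ∀ᵐ p ∂sqMeasure,
      Filter.Tendsto (fun n => blockAvg n r p) Filter.atTop (nhds (r p))) :
    Filter.Tendsto
      (fun n => ∫ p, |Real.log (blockAvg n r p) - Real.log (r p)| ∂sqMeasure)
      Filter.atTop (nhds 0) := by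
  classical
  set μ := sqMeasure with hμdef
  set g : ℝ × ℝ → ℝ := fun p => -Real.log (r p) with hgdef
  have hgm : Measurable g := (Real.measurable_log.comp hrm).neg
  have hgnn : ∀ p ∈ Set.Icc (0:ℝ) 1 ×ˢ Set.Icc (0:ℝ) 1, 0 ≤ g p := fun p hp =>
    neg_nonneg.2 (Real.log_nonpos (hr p hp).1.le (hr p hp).2.le)
  have hgi : Integrable g μ := hlogr.neg
  set A : ℝ × ℝ → ENNReal := fun p => ENNReal.ofReal (g p) with hAdef
  have hAm : Measurable A := hgm.ennreal_ofReal
  set An : ℕ → ℝ × ℝ → ENNReal :=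
    fun n p => ENNReal.ofReal (-Real.log (blockAvg n r p)) with hAndef
  have hAnm : ∀ n, Measurable (An n) := fun n =>
    ((Real.measurable_log.comp (blockAvg_measurable n r)).neg).ennreal_ofReal
  set Ln : ℕ → ℝ × ℝ → ENNReal :=
    fun n p => ENNReal.ofReal |Real.log (blockAvg n r p) - Real.log (r p)| with hLndef
  have hLnm : ∀ n, Measurable (Ln n) := fun n =>
    (((Real.measurable_log.comp (blockAvg_measurable n r)).sub
      (Real.measurable_log.comp hrm)).abs).ennreal_ofReal
  set I : ENNReal := ∫⁻ p, A p ∂μ with hIdef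
  have hIfin : I ≠ ⊤ := hgi.lintegral_lt_top.ne
  -- Jensen a.e. facts
  have hjen : ∀ᵐ q ∂μ, ∀ n, 1 ≤ n → (0 < blockAvg n r q ∧ blockAvg n r q ≤ 1 ∧
      -Real.log (blockAvg n r q) ≤ blockAvg n g q) :=
    sq_ae_mem_Ico.mono (fun q hq n hn => jensen_block r hr hrm hlogr hn hq)
  -- integral of block average of g
  have hGI : ∀ n, 1 ≤ n → ∫⁻ p, ENNReal.ofReal (blockAvg n g p) ∂μ = I := by
    intro n hn
    rw [hμdef, sq_lintegral_eq, blockAvg_lintegral g hgm hgnn hgi hn, hIdef, hμdef,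
      sq_lintegral_eq]
  have hAnI : ∀ n, 1 ≤ n → ∫⁻ p, An n p ∂μ ≤ I := by
    intro n hn
    calc ∫⁻ p, An n p ∂μ ≤ ∫⁻ p, ENNReal.ofReal (blockAvg n g p) ∂μ :=
      lintegral_mono_ae (hjen.mono (fun q hq =>
        ENNReal.ofReal_le_ofReal (hq n hn).2.2))
    _ = I := hGI n hn
  -- a.e. convergence
  have hmemIcc : ∀ᵐ q ∂μ, q ∈ Set.Icc (0:ℝ) 1 ×ˢ Set.Icc (0:ℝ) 1 :=
    ae_restrict_mem (measurableSet_Icc.prod measurableSet_Icc)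
  have hconv : ∀ᵐ q ∂μ,
      Filter.Tendsto (fun n => An n q) Filter.atTop (nhds (A q)) ∧
      Filter.Tendsto (fun n => Ln n q) Filter.atTop (nhds 0) := by
    filter_upwards [hae, hmemIcc] with q hq hqm
    have hrq : r q ≠ 0 := (hr q hqm).1.ne'
    have hlogt : Filter.Tendsto (fun n => Real.log (blockAvg n r q)) Filter.atTop
        (nhds (Real.log (r q))) := hq.log hrq
    constructor
    · exact (ENNReal.tendsto_ofReal (hlogt.neg))
    · have : Filter.Tendsto (fun n => |Real.log (blockAvg n r q) - Real.log (r q)|)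
          Filter.atTop (nhds |Real.log (r q) - Real.log (r q)|) :=
        (hlogt.sub tendsto_const_nhds).abs
      rw [sub_self, abs_zero] at this
      simpa using ENNReal.tendsto_ofReal this
  -- Fatou
  have hfatou : I ≤ Filter.liminf (fun n => ∫⁻ p, An n p ∂μ) Filter.atTop := by
    have : I = ∫⁻ p, Filter.liminf (fun n => An n p) Filter.atTop ∂μ := by
      refine lintegral_congr_ae (hconv.mono (fun q hq => ?_))
      exact (hq.1.liminf_eq).symm
    rw [this]
    exact lintegral_liminf_le hAnm
  have hlimsup : Filter.limsup (fun n => ∫⁻ p, An n p ∂μ) Filter.atTop ≤ I :=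
    Filter.limsup_le_of_le (by isBoundedDefault)
      ((Filter.eventually_ge_atTop 1).mono (fun n hn => hAnI n hn))
  have hAntend : Filter.Tendsto (fun n => ∫⁻ p, An n p ∂μ) Filter.atTop (nhds I) :=
    tendsto_of_le_liminf_of_limsup_le hfatou hlimsup
  -- bound Ln ≤ An + A a.e. (for n ≥ 1)
  have hLbound : ∀ᵐ q ∂μ, ∀ n, 1 ≤ n → Ln n q ≤ An n q + A q := by
    filter_upwards [hjen, hmemIcc] with q hq hqm n hn
    obtain ⟨hpos, hle1, _⟩ := hq n hn
    have h1 : Real.log (blockAvg n r q) ≤ 0 := Real.log_nonpos hpos.le hle1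
    have h2 : Real.log (r q) ≤ 0 := Real.log_nonpos (hr q hqm).1.le (hr q hqm).2.le
    have habs : |Real.log (blockAvg n r q) - Real.log (r q)| ≤
        -Real.log (blockAvg n r q) + -Real.log (r q) := by
      rw [abs_sub_le_iff]; constructor <;> nlinarith
    calc Ln n q ≤ ENNReal.ofReal (-Real.log (blockAvg n r q) + -Real.log (r q)) :=
      ENNReal.ofReal_le_ofReal habs
    _ ≤ An n q + A q := ENNReal.ofReal_add_le
  -- Dn and its convergence
  set Dn : ℕ → ℝ × ℝ → ENNReal := fun n q => (An n q + A q) - Ln n q with hDndef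
  have hDnm : ∀ n, Measurable (Dn n) := fun n => ((hAnm n).add hAm).sub (hLnm n)
  have hDconv : ∀ᵐ q ∂μ,
      Filter.Tendsto (fun n => Dn n q) Filter.atTop (nhds (A q + A q)) := by
    filter_upwards [hconv] with q hq
    have := ENNReal.Tendsto.sub (hq.1.add (tendsto_const_nhds (x := A q))) hq.2
      (Or.inr (by simp : (0:ENNReal) ≠ ⊤))
    simpa using this
  have hDfatou : I + I ≤ Filter.liminf (fun n => ∫⁻ p, Dn n p ∂μ) Filter.atTop := by
    have h2I : I + I = ∫⁻ p, Filter.liminf (fun n => Dn n p) Filter.atTop ∂μ := by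
      have : I + I = ∫⁻ p, (A p + A p) ∂μ := (lintegral_add_left hAm A).symm
      rw [this]
      exact lintegral_congr_ae (hDconv.mono (fun q hq => (hq.liminf_eq).symm))
    rw [h2I]
    exact lintegral_liminf_le hDnm
  -- key additivity identity
  have hkey : ∀ n, 1 ≤ n → ∫⁻ p, Ln n p ∂μ + ∫⁻ p, Dn n p ∂μ = ∫⁻ p, An n p ∂μ + I := by
    intro n hn
    have hsum : ∫⁻ p, (Dn n p + Ln n p) ∂μ = ∫⁻ p, Dn n p ∂μ + ∫⁻ p, Ln n p ∂μ :=
      lintegral_add_left (hDnm n) (Ln n)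
    have hcongr : ∫⁻ p, (Dn n p + Ln n p) ∂μ = ∫⁻ p, (An n p + A p) ∂μ := by
      refine lintegral_congr_ae (hLbound.mono (fun q hq => ?_))
      exact tsub_add_cancel_of_le (hq n hn)
    rw [add_comm, ← hsum, hcongr, lintegral_add_left (hAnm n)]
  have hDle : ∀ n, 1 ≤ n → ∫⁻ p, Dn n p ∂μ ≤ ∫⁻ p, An n p ∂μ + I := fun n hn =>
    (le_add_left le_rfl).trans (hkey n hn).le
  have hplus : Filter.Tendsto (fun n => ∫⁻ p, An n p ∂μ + I) Filter.atTop
      (nhds (I + I)) := hAntend.add tendsto_const_nhds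
  have hDlimsup : Filter.limsup (fun n => ∫⁻ p, Dn n p ∂μ) Filter.atTop ≤ I + I := by
    refine le_trans (Filter.limsup_le_limsup
      ((Filter.eventually_ge_atTop 1).mono (fun n hn => hDle n hn))) ?_
    rw [hplus.limsup_eq]
  have hDtend : Filter.Tendsto (fun n => ∫⁻ p, Dn n p ∂μ) Filter.atTop (nhds (I + I)) :=
    tendsto_of_le_liminf_of_limsup_le hDfatou hDlimsup
  -- conclude Ln integrals tend to 0
  have hDfin : ∀ n, 1 ≤ n → ∫⁻ p, Dn n p ∂μ ≠ ⊤ := by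
    intro n hn
    exact ((hDle n hn).trans_lt (lt_of_le_of_lt (add_le_add (hAnI n hn) le_rfl)
      (by simpa using ENNReal.add_lt_top.2 ⟨hIfin.lt_top, hIfin.lt_top⟩))).ne
  have hLeq : ∀ᶠ n in Filter.atTop, ∫⁻ p, Ln n p ∂μ =
      (∫⁻ p, An n p ∂μ + I) - ∫⁻ p, Dn n p ∂μ := by
    filter_upwards [Filter.eventually_ge_atTop 1] with n hn
    exact ENNReal.eq_sub_of_add_eq (hDfin n hn) (hkey n hn)
  have hLtend : Filter.Tendsto (fun n => ∫⁻ p, Ln n p ∂μ) Filter.atTop (nhds 0) := by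
    have := ENNReal.Tendsto.sub hplus hDtend
      (Or.inl (show I + I ≠ ⊤ from (ENNReal.add_lt_top.2 ⟨hIfin.lt_top, hIfin.lt_top⟩).ne))
    rw [tsub_self] at this
    exact Filter.Tendsto.congr' (hLeq.mono (fun n hn => hn.symm)) this
  -- convert to Bochner integrals
  have hBochner : ∀ n, ∫ p, |Real.log (blockAvg n r p) - Real.log (r p)| ∂μ =
      (∫⁻ p, Ln n p ∂μ).toReal := by
    intro n
    have hm : Measurable fun p : ℝ × ℝ => |Real.log (blockAvg n r p) - Real.log (r p)| :=
      ((Real.measurable_log.comp (blockAvg_measurable n r)).sub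
        (Real.measurable_log.comp hrm)).abs
    rw [integral_eq_lintegral_of_nonneg_ae (Filter.Eventually.of_forall (fun p => abs_nonneg _))
      hm.aestronglyMeasurable]
  simp only [hBochner]
  have := (ENNReal.tendsto_toReal (by simp : (0:ENNReal) ≠ ⊤)).comp hLtend
  simpa [Function.comp_def] using this
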